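/- Define α_n(k) for n ≥ 1 by 2^{n·α_n(k)} = (1/2^n)|Σ_{j=0}^{2^n−1} η_j e^{−2πi j k}|² whenever the right side is nonzero; equivalently α_{2^n}(k) = 1 + (2/(n log 2)) Σ_{j=0}^{n−1} log|sin(π 2^j k)|. Then for almost every k ∈ ℝ (with respect to Lebesgue measure), lim_{n→∞} α_{2^n}(k) = −1. -/

import Mathlib

open Real Filter MeasureTheory intervalIntegral

/-- The scaling exponent `α_{2^n}(k)`, defined via the Riesz-product identity
`(1/2^n) |∑_{j<2^n} η_j e^{-2πijk}|² = 2^{n α_{2^n}(k)}`, equivalently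
`α_{2^n}(k) = 1 + (2/(n log 2)) ∑_{j<n} log |sin (π 2^j k)|`. -/
noncomputable def tmScalingExp (n : ℕ) (k : ℝ) : ℝ :=
  1 + 2 / (n * Real.log 2) * ∑ j ∈ Finset.range n, Real.log |Real.sin (Real.pi * 2 ^ j * k)|

noncomputable def tmG (x : ℝ) : ℝ := Real.log 2 + Real.log |Real.sin (Real.pi * x)|

lemma tmG_measurable : Measurable tmG := by
  apply measurable_const.add
  exact Real.measurable_log.comp ((continuous_abs.comp (Real.continuous_sin.comp
    (continuous_const.mul continuous_id))).measurable)

lemma tmG_periodic : Function.Periodic tmG 1 := by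
  intro x
  unfold tmG
  rw [mul_add, mul_one, Real.sin_add_pi, abs_neg]

lemma tmG_add_int (x : ℝ) (z : ℤ) : tmG (x + z) = tmG x := by
  have := tmG_periodic.sub_int_mul_eq (x := x + z) z
  simpa using this.symm

lemma tmG_add_nat (x : ℝ) (n : ℕ) : tmG (x + n) = tmG x := by
  simpa using tmG_add_int x n

lemma tmG_cocycle {x : ℝ} (hx : x ∈ Set.Ioo (0:ℝ) 1) :
    tmG (x / 2) + tmG ((x + 1) / 2) = tmG x := by
  obtain ⟨h0, h1⟩ := hx
  have hs : 0 < Real.sin (Real.pi * (x / 2)) := by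
    apply Real.sin_pos_of_pos_of_lt_pi
    · positivity
    · nlinarith [Real.pi_pos]
  have hc : 0 < Real.cos (Real.pi * (x / 2)) := by
    apply Real.cos_pos_of_mem_Ioo
    constructor <;> nlinarith [Real.pi_pos]
  have h2 : Real.sin (Real.pi * ((x + 1) / 2)) = Real.cos (Real.pi * (x / 2)) := by
    rw [show Real.pi * ((x + 1) / 2) = Real.pi * (x / 2) + Real.pi / 2 by ring,
      Real.sin_add_pi_div_two]
  have hsin2 : Real.sin (Real.pi * x) = 2 * Real.sin (Real.pi * (x / 2)) * Real.cos (Real.pi * (x / 2)) := by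
    have : Real.pi * x = 2 * (Real.pi * (x / 2)) := by ring
    rw [this, Real.sin_two_mul]
  unfold tmG
  rw [h2, hsin2, abs_of_pos hs, abs_of_pos hc,
    abs_of_pos (by positivity : (0:ℝ) < 2 * Real.sin (Real.pi * (x / 2)) * Real.cos (Real.pi * (x / 2))),
    Real.log_mul (by positivity) (ne_of_gt hc), Real.log_mul (by norm_num) (ne_of_gt hs)]
  ring

lemma sin_pi_lower {x : ℝ} (hx : x ∈ Set.Ioo (0:ℝ) 1) : x * (1 - x) ≤ Real.sin (Real.pi * x) := by
  obtain ⟨h0, h1⟩ := hx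
  rcases le_total x (1/2) with h | h
  · have : 2 / Real.pi * (Real.pi * x) ≤ Real.sin (Real.pi * x) :=
      Real.mul_le_sin (by positivity) (by nlinarith [Real.pi_pos])
    have hπ : 2 / Real.pi * (Real.pi * x) = 2 * x := by
      field_simp
    nlinarith
  · have h2 : Real.sin (Real.pi * x) = Real.sin (Real.pi * (1 - x)) := by
      rw [show Real.pi * (1 - x) = Real.pi - Real.pi * x by ring, Real.sin_pi_sub]
    have : 2 / Real.pi * (Real.pi * (1 - x)) ≤ Real.sin (Real.pi * (1 - x)) :=
      Real.mul_le_sin (by nlinarith [Real.pi_pos]) (by nlinarith [Real.pi_pos])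
    have hπ : 2 / Real.pi * (Real.pi * (1 - x)) = 2 * (1 - x) := by
      field_simp
    nlinarith

lemma tmG_abs_le {x : ℝ} (hx : x ∈ Set.Ioo (0:ℝ) 1) :
    |tmG x| ≤ Real.log 2 - Real.log x - Real.log (1 - x) := by
  obtain ⟨h0, h1⟩ := hx
  have hs0 : 0 < Real.sin (Real.pi * x) := by
    apply Real.sin_pos_of_pos_of_lt_pi
    · positivity
    · nlinarith [Real.pi_pos]
  have hs1 : Real.sin (Real.pi * x) ≤ 1 := Real.sin_le_one _
  have hlow : x * (1 - x) ≤ Real.sin (Real.pi * x) := sin_pi_lower ⟨h0, h1⟩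
  have hlogle : Real.log (Real.sin (Real.pi * x)) ≤ 0 := Real.log_nonpos (le_of_lt hs0) hs1
  have hloglow : Real.log x + Real.log (1 - x) ≤ Real.log (Real.sin (Real.pi * x)) := by
    rw [← Real.log_mul (ne_of_gt h0) (by linarith)]
    exact Real.log_le_log (by nlinarith) hlow
  have habs : |Real.sin (Real.pi * x)| = Real.sin (Real.pi * x) := abs_of_pos hs0
  unfold tmG
  rw [habs]
  rw [abs_le]
  have hlog2 : (0:ℝ) ≤ Real.log 2 := Real.log_nonneg (by norm_num)
  constructor
  · linarith
  · linarith [Real.log_nonpos (le_of_lt h0) (le_of_lt h1) , hlogle]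

/-! Integrability -/

lemma log_sq_le_rpow {x : ℝ} (h0 : 0 < x) (h1 : x ≤ 1) :
    (Real.log x) ^ 2 ≤ 64 * x ^ (-(1/4) : ℝ) := by
  have hinv : 0 < x⁻¹ := by positivity
  have h8 : Real.log x = -(8 * Real.log (x⁻¹ ^ ((1:ℝ)/8))) := by
    rw [Real.log_rpow hinv, Real.log_inv]; ring
  have hle : Real.log (x⁻¹ ^ ((1:ℝ)/8)) ≤ x⁻¹ ^ ((1:ℝ)/8) :=
    (Real.log_le_sub_one_of_pos (by positivity)).trans (by linarith)
  have hnn : 0 ≤ Real.log (x⁻¹ ^ ((1:ℝ)/8)) := by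
    apply Real.log_nonneg
    apply Real.one_le_rpow (by rw [le_inv_comm₀] <;> simpa) (by norm_num)
  have hsq : (Real.log x)^2 ≤ 64 * (x⁻¹ ^ ((1:ℝ)/8))^2 := by
    rw [h8]
    have := sq_nonneg (Real.log (x⁻¹ ^ ((1:ℝ)/8)))
    nlinarith
  refine hsq.trans (le_of_eq ?_)
  rw [← Real.rpow_natCast (x⁻¹ ^ ((1:ℝ)/8)) 2, ← Real.rpow_mul (le_of_lt hinv),
    Real.rpow_neg (le_of_lt h0), ← Real.inv_rpow (le_of_lt h0)]
  norm_num

lemma ii_log_sq : IntervalIntegrable (fun x => (Real.log x) ^ 2) volume 0 1 := by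
  have hr : IntervalIntegrable (fun x : ℝ => 64 * x ^ (-(1/4) : ℝ)) volume 0 1 :=
    (intervalIntegral.intervalIntegrable_rpow' (by norm_num)).const_mul 64
  apply hr.mono_fun
  · exact ((Real.measurable_log.pow_const 2).aestronglyMeasurable)
  · rw [Filter.EventuallyLE, ae_restrict_iff' measurableSet_uIoc]
    refine Filter.Eventually.of_forall (fun x hx => ?_)
    rw [Set.uIoc_of_le (by norm_num : (0:ℝ) ≤ 1)] at hx
    have h1 := log_sq_le_rpow hx.1 hx.2
    have h2 : (0:ℝ) ≤ 64 * x ^ (-(1/4) : ℝ) := by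
      have := Real.rpow_nonneg (le_of_lt hx.1) (-(1/4) : ℝ)
      linarith
    simp only [Real.norm_eq_abs]
    rw [abs_of_nonneg (sq_nonneg (Real.log x)), abs_of_nonneg h2]
    exact h1

lemma ii_log_one_sub_sq : IntervalIntegrable (fun x => (Real.log (1 - x)) ^ 2) volume 0 1 := by
  have := (ii_log_sq.comp_sub_left 1)
  norm_num at this
  exact this.symm

noncomputable def tmB (x : ℝ) : ℝ :=
  3 * ((Real.log 2)^2 + (Real.log x)^2 + (Real.log (1 - x))^2)

lemma ii_tmB : IntervalIntegrable tmB volume 0 1 := by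
  unfold tmB
  apply IntervalIntegrable.const_mul
  exact ((intervalIntegrable_const.add ii_log_sq).add ii_log_one_sub_sq)

lemma tmG_sq_le_tmB {x : ℝ} (hx : x ∈ Set.Ioo (0:ℝ) 1) : (tmG x) ^ 2 ≤ tmB x := by
  have h := tmG_abs_le hx
  have h2 : (tmG x)^2 ≤ (Real.log 2 - Real.log x - Real.log (1 - x))^2 := by
    rw [← sq_abs]
    apply sq_le_sq' <;> [linarith [abs_nonneg (tmG x)]; exact h]
  refine h2.trans ?_
  unfold tmB
  nlinarith [sq_nonneg (Real.log 2 + Real.log x), sq_nonneg (Real.log 2 + Real.log (1-x)),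
    sq_nonneg (Real.log x - Real.log (1-x)), sq_nonneg (Real.log 2 - Real.log x),
    sq_nonneg (Real.log x + Real.log (1-x))]

lemma ae_uIoc_Ioo : ∀ᵐ x ∂(volume.restrict (Set.uIoc (0:ℝ) 1)), x ∈ Set.Ioo (0:ℝ) 1 := by
  rw [Set.uIoc_of_le (by norm_num : (0:ℝ) ≤ 1)]
  have h1 : ∀ᵐ x ∂(volume : Measure ℝ), x ≠ 1 := by
    rw [ae_iff]
    have : {x : ℝ | ¬ x ≠ 1} = {1} := by ext y; simp
    rw [this]; exact Real.volume_singleton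
  have h2 : ∀ᵐ x ∂(volume.restrict (Set.Ioc (0:ℝ) 1)), x ≠ 1 := ae_restrict_of_ae h1
  have h3 : ∀ᵐ x ∂(volume.restrict (Set.Ioc (0:ℝ) 1)), x ∈ Set.Ioc (0:ℝ) 1 :=
    ae_restrict_mem measurableSet_Ioc
  filter_upwards [h2, h3] with x hx1 hx2
  exact ⟨hx2.1, lt_of_le_of_ne hx2.2 hx1⟩

lemma ii_tmG_sq : IntervalIntegrable (fun x => (tmG x) ^ 2) volume 0 1 := by
  apply ii_tmB.mono_fun ((tmG_measurable.pow_const 2).aestronglyMeasurable)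
  filter_upwards [ae_uIoc_Ioo] with x hx
  have h1 := tmG_sq_le_tmB hx
  have h0 : (0:ℝ) ≤ tmB x := le_trans (sq_nonneg _) h1
  simp only [Real.norm_eq_abs]
  rw [abs_of_nonneg (sq_nonneg (tmG x)), abs_of_nonneg h0]
  exact h1

lemma ii_tmG : IntervalIntegrable tmG volume 0 1 := by
  have hint : IntervalIntegrable (fun x => 1 + tmG x ^ 2) volume 0 1 :=
    intervalIntegrable_const.add ii_tmG_sq
  apply hint.mono_fun tmG_measurable.aestronglyMeasurable
  refine Filter.Eventually.of_forall (fun x => ?_)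
  simp only [Real.norm_eq_abs]
  have h1 : (0:ℝ) ≤ 1 + tmG x ^ 2 := by positivity
  rw [abs_of_nonneg h1]
  nlinarith [sq_nonneg (|tmG x| - 1), sq_abs (tmG x)]

/-! Periodic extension of integrability -/

lemma periodic_ii {f : ℝ → ℝ} (hp : Function.Periodic f 1)
    (h : IntervalIntegrable f volume 0 1) (a b : ℝ) : IntervalIntegrable f volume a b := by
  have hz : ∀ z : ℤ, IntervalIntegrable f volume z (z + 1) := by
    intro z
    have h1 := h.comp_add_right (-(z:ℝ))
    have h2 : (fun x => f (x + -(z:ℝ))) = f := by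
      funext x
      have := hp.sub_int_mul_eq (x := x) z
      simpa [sub_eq_add_neg] using this
    rw [h2] at h1
    have e1 : (0:ℝ) - -(z:ℝ) = z := by ring
    have e2 : (1:ℝ) - -(z:ℝ) = z + 1 := by ring
    rwa [e1, e2] at h1
  have hN : ∀ N : ℕ, IntervalIntegrable f volume (-(N:ℝ)) N := by
    intro N
    induction N with
    | zero => simp
    | succ n ih =>
      have hleft : IntervalIntegrable f volume (-(n:ℝ) - 1) (-(n:ℝ)) := by
        have h3 := hz (-(n:ℤ) - 1)
        push_cast at h3
        have e : (-(n:ℝ) - 1 + 1) = -(n:ℝ) := by ring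
        rwa [e] at h3
      have hright : IntervalIntegrable f volume (n:ℝ) ((n:ℝ) + 1) := by
        have h3 := hz (n:ℤ)
        push_cast at h3
        exact h3
      have h4 := (hleft.trans (ih.trans hright))
      have e1 : (-(n:ℝ) - 1) = -(((n:ℕ)+1 : ℕ):ℝ) := by push_cast; ring
      have e2 : ((n:ℝ) + 1) = (((n:ℕ)+1 : ℕ):ℝ) := by push_cast; ring
      rwa [e1, e2] at h4
  obtain ⟨N, hNa⟩ := exists_nat_ge (max |a| |b|)
  have ha' : |a| ≤ (N:ℝ) := le_trans (le_max_left _ _) hNa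
  have hb' : |b| ≤ (N:ℝ) := le_trans (le_max_right _ _) hNa
  have hNN : -(N:ℝ) ≤ (N:ℝ) := by linarith [abs_nonneg a]
  refine (hN N).mono_set (Set.uIcc_subset_uIcc ?_ ?_) <;>
    rw [Set.uIcc_of_le hNN]
  · exact ⟨(abs_le.mp ha').1, (abs_le.mp ha').2⟩
  · exact ⟨(abs_le.mp hb').1, (abs_le.mp hb').2⟩

/-! Splitting the unit interval in half -/

lemma half_split {F : ℝ → ℝ} (hF : IntervalIntegrable F volume 0 1) :
    ∫ x in (0:ℝ)..1, F x
      = (1/2) * ((∫ y in (0:ℝ)..1, F (y/2)) + ∫ y in (0:ℝ)..1, F ((y+1)/2)) := by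
  have h1 := intervalIntegral.integral_comp_div (a := (0:ℝ)) (b := 1) (c := (2:ℝ)) F (by norm_num)
  rw [show (0:ℝ)/2 = 0 by norm_num] at h1
  have ha := intervalIntegral.integral_comp_add_right (a := (0:ℝ)) (b := 1)
    (f := fun z => F (z/2)) 1
  rw [show (0:ℝ)+1 = 1 by norm_num, show (1:ℝ)+1 = 2 by norm_num] at ha
  have hb := intervalIntegral.integral_comp_div (a := (1:ℝ)) (b := 2) (c := (2:ℝ)) F (by norm_num)
  rw [show (2:ℝ)/2 = 1 by norm_num] at hb
  have m1 : Set.uIcc (0:ℝ) (1/2) ⊆ Set.uIcc (0:ℝ) 1 := by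
    apply Set.uIcc_subset_uIcc <;> rw [Set.uIcc_of_le (by norm_num : (0:ℝ) ≤ 1)] <;>
      constructor <;> norm_num
  have m2 : Set.uIcc (1/2 : ℝ) 1 ⊆ Set.uIcc (0:ℝ) 1 := by
    apply Set.uIcc_subset_uIcc <;> rw [Set.uIcc_of_le (by norm_num : (0:ℝ) ≤ 1)] <;>
      constructor <;> norm_num
  have h3 : (∫ x in (0:ℝ)..(1/2:ℝ), F x) + (∫ x in (1/2:ℝ)..1, F x) = ∫ x in (0:ℝ)..1, F x :=
    intervalIntegral.integral_add_adjacent_intervals (hF.mono_set m1) (hF.mono_set m2)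
  rw [h1, ha, hb]
  simp only [smul_eq_mul]
  linarith

/-! Composition integrability helpers -/

lemma ii_comp_affine {F : ℝ → ℝ} (hp : Function.Periodic F 1)
    (h : IntervalIntegrable F volume 0 1) (c d a b : ℝ) :
    IntervalIntegrable (fun x => F (c * x + d)) volume a b := by
  have h1 : IntervalIntegrable (fun x => F (x + d)) volume (c * a) (c * b) := by
    have h2 := (periodic_ii hp h (c * a + d) (c * b + d)).comp_add_right d
    simpa using h2
  rcases eq_or_ne c 0 with hc | hc
  · simpa [hc] using (intervalIntegrable_const (c := F d) (μ := volume) (a := a) (b := b))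
  · have h2 := h1.comp_mul_left (c := c)
    rwa [mul_div_cancel_left₀ _ hc, mul_div_cancel_left₀ _ hc] at h2

lemma tmG_sq_periodic : Function.Periodic (fun x => tmG x ^ 2) 1 := fun x => by
  simp [tmG_periodic x]

lemma ii_comp_pow {F : ℝ → ℝ} (hp : Function.Periodic F 1)
    (h : IntervalIntegrable F volume 0 1) (c : ℝ) (a b : ℝ) :
    IntervalIntegrable (fun x => F (c * x)) volume a b := by
  have := ii_comp_affine hp h c 0 a b
  simpa using this

lemma ii_tmG_pow_sq (i : ℕ) (a b : ℝ) :
    IntervalIntegrable (fun x => tmG (2 ^ i * x) ^ 2) volume a b :=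
  ii_comp_pow tmG_sq_periodic ii_tmG_sq (2 ^ i) a b

lemma ii_tmG_pow (i : ℕ) (a b : ℝ) :
    IntervalIntegrable (fun x => tmG (2 ^ i * x)) volume a b :=
  ii_comp_pow tmG_periodic ii_tmG (2 ^ i) a b

lemma ii_prod (i j : ℕ) (a b : ℝ) :
    IntervalIntegrable (fun x => tmG (2 ^ i * x) * tmG (2 ^ j * x)) volume a b := by
  have hint : IntervalIntegrable (fun x => tmG (2 ^ i * x) ^ 2 + tmG (2 ^ j * x) ^ 2) volume a b :=
    (ii_tmG_pow_sq i a b).add (ii_tmG_pow_sq j a b)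
  apply hint.mono_fun
  · exact ((tmG_measurable.comp (measurable_const_mul _)).mul
      (tmG_measurable.comp (measurable_const_mul _))).aestronglyMeasurable
  · refine Filter.Eventually.of_forall (fun x => ?_)
    simp only [Real.norm_eq_abs]
    rw [abs_of_nonneg (by positivity : (0:ℝ) ≤ tmG (2 ^ i * x) ^ 2 + tmG (2 ^ j * x) ^ 2), abs_mul]
    nlinarith [sq_nonneg (|tmG (2 ^ i * x)| - |tmG (2 ^ j * x)|), sq_abs (tmG (2 ^ i * x)),
      sq_abs (tmG (2 ^ j * x)), abs_nonneg (tmG (2 ^ i * x)), abs_nonneg (tmG (2 ^ j * x))]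

lemma ii_prod' (m : ℕ) (a b : ℝ) :
    IntervalIntegrable (fun x => tmG x * tmG (2 ^ m * x)) volume a b := by
  have := ii_prod 0 m a b
  simpa using this

lemma tmG_add_nat' (x : ℝ) (n : ℕ) : tmG (x + 2 ^ n) = tmG x := by
  rw [show ((2:ℝ) ^ n) = ((2 ^ n : ℕ) : ℝ) by push_cast; ring]
  exact tmG_add_nat x (2 ^ n)

lemma prod_periodic (m : ℕ) : Function.Periodic (fun x => tmG x * tmG (2 ^ m * x)) 1 := by
  intro x
  simp only [mul_add, mul_one]
  rw [tmG_periodic x, tmG_add_nat' (2 ^ m * x) m]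

lemma ae_uIoc_imp {P : ℝ → Prop} (h : ∀ x ∈ Set.Ioo (0:ℝ) 1, P x) :
    ∀ᵐ x ∂(volume : Measure ℝ), x ∈ Set.uIoc (0:ℝ) 1 → P x := by
  have h1 : ∀ᵐ x ∂(volume : Measure ℝ), x ≠ 1 := by
    rw [ae_iff]
    have e : {x : ℝ | ¬ x ≠ 1} = {1} := by ext y; simp
    rw [e]; exact Real.volume_singleton
  filter_upwards [h1] with x hx hmem
  rw [Set.uIoc_of_le (by norm_num : (0:ℝ) ≤ 1)] at hmem
  exact h x ⟨hmem.1, lt_of_le_of_ne hmem.2 hx⟩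

/-! Mean zero -/

lemma tmG_mean_zero : ∫ x in (0:ℝ)..1, tmG x = 0 := by
  have hs := half_split ii_tmG
  have hi1 : IntervalIntegrable (fun y => tmG (y / 2)) volume 0 1 := by
    have h := ii_comp_affine tmG_periodic ii_tmG (1/2) 0 0 1
    have e : (fun x : ℝ => tmG (1/2 * x + 0)) = fun y => tmG (y / 2) := by
      funext y; congr 1; ring
    rwa [e] at h
  have hi2 : IntervalIntegrable (fun y => tmG ((y + 1) / 2)) volume 0 1 := by
    have h := ii_comp_affine tmG_periodic ii_tmG (1/2) (1/2) 0 1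
    have e : (fun x : ℝ => tmG (1/2 * x + 1/2)) = fun y => tmG ((y + 1) / 2) := by
      funext y; congr 1; ring
    rwa [e] at h
  have hadd : (∫ y in (0:ℝ)..1, tmG (y / 2)) + (∫ y in (0:ℝ)..1, tmG ((y + 1) / 2))
      = ∫ y in (0:ℝ)..1, (tmG (y / 2) + tmG ((y + 1) / 2)) :=
    (intervalIntegral.integral_add hi1 hi2).symm
  have hcoc : (∫ y in (0:ℝ)..1, (tmG (y / 2) + tmG ((y + 1) / 2))) = ∫ y in (0:ℝ)..1, tmG y :=
    intervalIntegral.integral_congr_ae (ae_uIoc_imp (fun x hx => tmG_cocycle hx))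
  rw [hadd, hcoc] at hs
  linarith

/-! Covariance recursion -/

noncomputable def tmSig : ℝ := ∫ x in (0:ℝ)..1, tmG x ^ 2

lemma tmSig_nonneg : 0 ≤ tmSig :=
  intervalIntegral.integral_nonneg (by norm_num) (fun x _ => sq_nonneg _)

lemma cov_step (m : ℕ) :
    ∫ x in (0:ℝ)..1, tmG x * tmG (2 ^ (m + 1) * x)
      = (1/2) * ∫ x in (0:ℝ)..1, tmG x * tmG (2 ^ m * x) := by
  have hs := half_split (ii_prod' (m + 1) 0 1)
  have e1 : (fun y : ℝ => tmG (y / 2) * tmG (2 ^ (m + 1) * (y / 2)))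
      = fun y => tmG (y / 2) * tmG (2 ^ m * y) := by
    funext y; congr 2; rw [pow_succ]; ring
  have e2 : (fun y : ℝ => tmG ((y + 1) / 2) * tmG (2 ^ (m + 1) * ((y + 1) / 2)))
      = fun y => tmG ((y + 1) / 2) * tmG (2 ^ m * y) := by
    funext y
    congr 1
    rw [show (2:ℝ) ^ (m + 1) * ((y + 1) / 2) = 2 ^ m * y + 2 ^ m by rw [pow_succ]; ring]
    exact tmG_add_nat' (2 ^ m * y) m
  have hi1 : IntervalIntegrable (fun y => tmG (y / 2) * tmG (2 ^ m * y)) volume 0 1 := by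
    have h := ii_comp_pow (prod_periodic (m + 1)) (ii_prod' (m + 1) 0 1) (1/2) 0 1
    have e : (fun x : ℝ => tmG (1/2 * x) * tmG (2 ^ (m + 1) * (1/2 * x)))
        = fun y => tmG (y / 2) * tmG (2 ^ m * y) := by
      funext y; congr 2
      · ring
      · rw [pow_succ]; ring
    rwa [e] at h
  have hi2 : IntervalIntegrable (fun y => tmG ((y + 1) / 2) * tmG (2 ^ m * y)) volume 0 1 := by
    have h := ii_comp_affine (prod_periodic (m + 1)) (ii_prod' (m + 1) 0 1) (1/2) (1/2) 0 1
    have e : (fun x : ℝ => tmG (1/2 * x + 1/2) * tmG (2 ^ (m + 1) * (1/2 * x + 1/2)))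
        = fun y => tmG ((y + 1) / 2) * tmG (2 ^ m * y) := by
      funext y
      congr 1
      · congr 1; ring
      · rw [show (2:ℝ) ^ (m + 1) * (1/2 * y + 1/2) = 2 ^ m * y + 2 ^ m by rw [pow_succ]; ring]
        exact tmG_add_nat' (2 ^ m * y) m
    rwa [e] at h
  rw [show (fun x : ℝ => tmG x * tmG (2 ^ (m+1) * x)) = fun x : ℝ => tmG x * tmG (2 ^ (m+1) * x) from rfl] at hs
  simp only [e1, e2] at hs
  have hadd : (∫ y in (0:ℝ)..1, tmG (y / 2) * tmG (2 ^ m * y))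
      + (∫ y in (0:ℝ)..1, tmG ((y + 1) / 2) * tmG (2 ^ m * y))
      = ∫ y in (0:ℝ)..1, (tmG (y / 2) * tmG (2 ^ m * y) + tmG ((y + 1) / 2) * tmG (2 ^ m * y)) :=
    (intervalIntegral.integral_add hi1 hi2).symm
  have hcoc : (∫ y in (0:ℝ)..1, (tmG (y / 2) * tmG (2 ^ m * y) + tmG ((y + 1) / 2) * tmG (2 ^ m * y)))
      = ∫ y in (0:ℝ)..1, tmG y * tmG (2 ^ m * y) := by
    apply intervalIntegral.integral_congr_ae
    apply ae_uIoc_imp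
    intro x hx
    rw [← add_mul, tmG_cocycle hx]
  rw [hadd, hcoc] at hs
  linarith

lemma cov_pow (m : ℕ) :
    ∫ x in (0:ℝ)..1, tmG x * tmG (2 ^ m * x) = (1/2) ^ m * tmSig := by
  induction m with
  | zero =>
    simp only [pow_zero, one_mul]
    rw [show (fun x : ℝ => tmG x * tmG x) = fun x => tmG x ^ 2 by funext x; ring]
    rfl
  | succ n ih =>
    rw [cov_step n, ih, pow_succ]
    ring

/-! Scale invariance of the integral for periodic integrands -/

lemma double_invar {F : ℝ → ℝ} (hp : Function.Periodic F 1)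
    (hF : IntervalIntegrable F volume 0 1) :
    ∫ x in (0:ℝ)..1, F (2 * x) = ∫ x in (0:ℝ)..1, F x := by
  have h1 := intervalIntegral.integral_comp_mul_left (a := (0:ℝ)) (b := 1) (c := (2:ℝ)) F
    (by norm_num)
  rw [show (2:ℝ) * 0 = 0 by norm_num, show (2:ℝ) * 1 = 2 by norm_num] at h1
  have h2 : (∫ x in (0:ℝ)..2, F x) = (∫ x in (0:ℝ)..1, F x) + ∫ x in (1:ℝ)..2, F x :=
    (intervalIntegral.integral_add_adjacent_intervals (periodic_ii hp hF 0 1)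
      (periodic_ii hp hF 1 2)).symm
  have h3 : (∫ x in (1:ℝ)..2, F x) = ∫ x in (0:ℝ)..1, F x := by
    have := hp.intervalIntegral_add_eq 1 0
    norm_num at this
    exact this
  rw [h1, h2, h3]
  simp only [smul_eq_mul]
  ring

lemma scale_invar {F : ℝ → ℝ} (hp : Function.Periodic F 1)
    (hF : IntervalIntegrable F volume 0 1) (i : ℕ) :
    ∫ x in (0:ℝ)..1, F (2 ^ i * x) = ∫ x in (0:ℝ)..1, F x := by
  induction i with
  | zero => simp
  | succ n ih =>
    have hGp : Function.Periodic (fun y => F (2 ^ n * y)) 1 := by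
      intro y
      simp only [mul_add, mul_one]
      have h := hp.sub_int_mul_eq (x := 2 ^ n * y) (-(2 ^ n : ℤ))
      push_cast at h
      rw [show (2:ℝ) ^ n * y + 2 ^ n = 2 ^ n * y - -2 ^ n * 1 by ring]
      exact h
    have hGi : IntervalIntegrable (fun y => F (2 ^ n * y)) volume 0 1 :=
      ii_comp_pow hp hF (2 ^ n) 0 1
    have h := double_invar hGp hGi
    have e : (fun x : ℝ => F (2 ^ n * (2 * x))) = fun x => F (2 ^ (n + 1) * x) := by
      funext x; congr 1; rw [pow_succ]; ring
    rw [← ih, ← h]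
    exact intervalIntegral.integral_congr (fun x _ => (congrFun e x).symm)

lemma cov_full {i j : ℕ} (hij : i ≤ j) :
    ∫ x in (0:ℝ)..1, tmG (2 ^ i * x) * tmG (2 ^ j * x) = (1/2) ^ (j - i) * tmSig := by
  have e : (fun x : ℝ => tmG (2 ^ i * x) * tmG (2 ^ j * x))
      = fun x => (fun y => tmG y * tmG (2 ^ (j - i) * y)) (2 ^ i * x) := by
    funext x
    simp only
    congr 2
    rw [← mul_assoc, ← pow_add]
    congr 2
    omega
  rw [e, scale_invar (prod_periodic (j - i)) (ii_prod' (j - i) 0 1) i, cov_pow]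

lemma cov_dist (i j : ℕ) :
    ∫ x in (0:ℝ)..1, tmG (2 ^ i * x) * tmG (2 ^ j * x) = (1/2) ^ (Nat.dist i j) * tmSig := by
  rcases le_total i j with h | h
  · rw [cov_full h, Nat.dist_eq_sub_of_le h]
  · have e : (fun x : ℝ => tmG (2 ^ i * x) * tmG (2 ^ j * x))
        = fun x => tmG (2 ^ j * x) * tmG (2 ^ i * x) := by funext x; ring
    rw [e, cov_full h, Nat.dist_comm, Nat.dist_eq_sub_of_le h]

lemma sq_invar (i : ℕ) :
    ∫ x in (0:ℝ)..1, tmG (2 ^ i * x) ^ 2 = tmSig :=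
  scale_invar tmG_sq_periodic ii_tmG_sq i

/-! The probability space -/

noncomputable def tmMu : Measure ℝ := volume.restrict (Set.Ioc (0:ℝ) 1)

instance : IsProbabilityMeasure tmMu := by
  constructor
  unfold tmMu
  rw [Measure.restrict_apply MeasurableSet.univ, Set.univ_inter, Real.volume_Ioc]
  norm_num

lemma integral_tmMu (f : ℝ → ℝ) : ∫ k, f k ∂tmMu = ∫ x in (0:ℝ)..1, f x :=
  (intervalIntegral.integral_of_le zero_le_one).symm

lemma integrable_tmMu {f : ℝ → ℝ} (h : IntervalIntegrable f volume 0 1) : Integrable f tmMu :=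
  (intervalIntegrable_iff_integrableOn_Ioc_of_le zero_le_one).mp h

noncomputable def tmS (n : ℕ) (k : ℝ) : ℝ := ∑ j ∈ Finset.range n, tmG (2 ^ j * k)

noncomputable def tmD (m : ℕ) (k : ℝ) : ℝ :=
  ∑ j ∈ Finset.Ico (m ^ 2) ((m + 1) ^ 2), |tmG (2 ^ j * k)|

lemma tmS_measurable (n : ℕ) : Measurable (tmS n) :=
  Finset.measurable_sum _ (fun j _ => tmG_measurable.comp (measurable_const_mul _))

lemma tmD_measurable (m : ℕ) : Measurable (tmD m) :=
  Finset.measurable_sum _ (fun j _ =>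
    (tmG_measurable.comp (measurable_const_mul _)).abs)

lemma tmD_nonneg (m : ℕ) (k : ℝ) : 0 ≤ tmD m k :=
  Finset.sum_nonneg (fun j _ => abs_nonneg _)

/-! Row sums of the covariance matrix -/

lemma row_sum (n j : ℕ) : ∑ i ∈ Finset.range n, ((1:ℝ)/2) ^ (Nat.dist i j) ≤ 4 := by
  have h1 : ∑ i ∈ Finset.range n, ((1:ℝ)/2) ^ (Nat.dist i j)
      ≤ ∑ i ∈ Finset.range (n + j + 1), ((1:ℝ)/2) ^ (Nat.dist i j) :=
    Finset.sum_le_sum_of_subset_of_nonneg (Finset.range_subset_range.mpr (by omega))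
      (fun i _ _ => by positivity)
  have hsplit : (∑ i ∈ Finset.Ico 0 (j + 1), ((1:ℝ)/2) ^ (Nat.dist i j))
      + (∑ i ∈ Finset.Ico (j + 1) (n + j + 1), ((1:ℝ)/2) ^ (Nat.dist i j))
      = ∑ i ∈ Finset.Ico 0 (n + j + 1), ((1:ℝ)/2) ^ (Nat.dist i j) :=
    Finset.sum_Ico_consecutive _ (by omega) (by omega)
  have hfirst : (∑ i ∈ Finset.range (j + 1), ((1:ℝ)/2) ^ (Nat.dist i j)) ≤ 2 := by
    have hrefl := Finset.sum_range_reflect (fun i => ((1:ℝ)/2) ^ (Nat.dist i j)) (j + 1)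
    rw [← hrefl]
    have : ∀ i ∈ Finset.range (j + 1),
        ((1:ℝ)/2) ^ (Nat.dist (j + 1 - 1 - i) j) = ((1:ℝ)/2) ^ i := by
      intro i hi
      have hi' := Finset.mem_range.mp hi
      congr 1
      rw [Nat.dist_eq_sub_of_le (by omega)]
      omega
    rw [Finset.sum_congr rfl this]
    exact sum_geometric_two_le _
  have hsecond : (∑ i ∈ Finset.Ico (j + 1) (n + j + 1), ((1:ℝ)/2) ^ (Nat.dist i j)) ≤ 2 := by
    rw [Finset.sum_Ico_eq_sum_range]
    have : ∀ t ∈ Finset.range (n + j + 1 - (j + 1)),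
        ((1:ℝ)/2) ^ (Nat.dist (j + 1 + t) j) = ((1:ℝ)/2) ^ (t + 1) := by
      intro t _
      congr 1
      rw [Nat.dist_comm, Nat.dist_eq_sub_of_le (by omega)]
      omega
    rw [Finset.sum_congr rfl this]
    calc ∑ t ∈ Finset.range (n + j + 1 - (j + 1)), ((1:ℝ)/2) ^ (t + 1)
        ≤ ∑ t ∈ Finset.range (n + j + 1 - (j + 1)), ((1:ℝ)/2) ^ t :=
          Finset.sum_le_sum (fun t _ => by
            apply pow_le_pow_of_le_one (by norm_num) (by norm_num) (by omega))
      _ ≤ 2 := sum_geometric_two_le _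
  rw [← Finset.range_eq_Ico, ← Finset.range_eq_Ico] at hsplit
  linarith

/-! Second moment of S -/

lemma tmS_sq_eq (n : ℕ) (k : ℝ) : tmS n k ^ 2
    = ∑ i ∈ Finset.range n, ∑ j ∈ Finset.range n, tmG (2 ^ i * k) * tmG (2 ^ j * k) := by
  rw [sq]
  unfold tmS
  rw [Finset.sum_mul_sum]

lemma tmS_sq_integrable (n : ℕ) : Integrable (fun k => tmS n k ^ 2) tmMu := by
  have e : (fun k => tmS n k ^ 2)
      = fun k => ∑ i ∈ Finset.range n, ∑ j ∈ Finset.range n, tmG (2 ^ i * k) * tmG (2 ^ j * k) := by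
    funext k; exact tmS_sq_eq n k
  rw [e]
  apply integrable_finset_sum
  intro i _
  apply integrable_finset_sum
  intro j _
  exact integrable_tmMu (ii_prod i j 0 1)

lemma tmS_sq_moment (n : ℕ) : ∫ k, tmS n k ^ 2 ∂tmMu ≤ 4 * n * tmSig := by
  have e : ∫ k, tmS n k ^ 2 ∂tmMu
      = ∑ i ∈ Finset.range n, ∑ j ∈ Finset.range n, ((1:ℝ)/2) ^ (Nat.dist i j) * tmSig := by
    have e1 : (fun k => tmS n k ^ 2)
        = fun k => ∑ i ∈ Finset.range n, ∑ j ∈ Finset.range n, tmG (2 ^ i * k) * tmG (2 ^ j * k) := by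
      funext k; exact tmS_sq_eq n k
    rw [e1, integral_finset_sum _ (fun i _ => integrable_finset_sum _
      (fun j _ => integrable_tmMu (ii_prod i j 0 1)))]
    apply Finset.sum_congr rfl
    intro i _
    rw [integral_finset_sum _ (fun j _ => integrable_tmMu (ii_prod i j 0 1))]
    apply Finset.sum_congr rfl
    intro j _
    rw [integral_tmMu, cov_dist]
  rw [e]
  calc ∑ i ∈ Finset.range n, ∑ j ∈ Finset.range n, ((1:ℝ)/2) ^ (Nat.dist i j) * tmSig
      ≤ ∑ i ∈ Finset.range n, 4 * tmSig := by
        apply Finset.sum_le_sum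
        intro i _
        rw [← Finset.sum_mul]
        apply mul_le_mul_of_nonneg_right _ tmSig_nonneg
        have : ∀ j ∈ Finset.range n, ((1:ℝ)/2) ^ (Nat.dist i j) = ((1:ℝ)/2) ^ (Nat.dist j i) := by
          intro j _; rw [Nat.dist_comm]
        rw [Finset.sum_congr rfl this]
        exact row_sum n i
    _ = 4 * n * tmSig := by
        rw [Finset.sum_const, Finset.card_range]
        simp [mul_assoc, mul_comm]
        ring

/-! Second moment of D -/

lemma tmD_sq_moment (m : ℕ) :
    ∫ k, tmD m k ^ 2 ∂tmMu ≤ ((2 * m + 1 : ℕ) : ℝ) ^ 2 * tmSig := by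
  set c : ℕ := 2 * m + 1 with hc
  have hcard : (Finset.Ico (m ^ 2) ((m + 1) ^ 2)).card = c := by
    rw [Nat.card_Ico]
    have he : (m + 1) ^ 2 = m ^ 2 + 2 * m + 1 := by ring
    omega
  have hpt : ∀ k, tmD m k ^ 2
      ≤ (c:ℝ) * ∑ j ∈ Finset.Ico (m ^ 2) ((m + 1) ^ 2), tmG (2 ^ j * k) ^ 2 := by
    intro k
    have h1 := sq_sum_le_card_mul_sum_sq (s := Finset.Ico (m ^ 2) ((m + 1) ^ 2))
      (f := fun j => |tmG (2 ^ j * k)|)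
    rw [hcard] at h1
    unfold tmD
    calc (∑ j ∈ Finset.Ico (m ^ 2) ((m + 1) ^ 2), |tmG (2 ^ j * k)|) ^ 2
        ≤ (c:ℝ) * ∑ j ∈ Finset.Ico (m ^ 2) ((m + 1) ^ 2), |tmG (2 ^ j * k)| ^ 2 := h1
      _ = (c:ℝ) * ∑ j ∈ Finset.Ico (m ^ 2) ((m + 1) ^ 2), tmG (2 ^ j * k) ^ 2 := by
          congr 1
          exact Finset.sum_congr rfl (fun j _ => sq_abs _)
  have hint : Integrable
      (fun k => (c:ℝ) * ∑ j ∈ Finset.Ico (m ^ 2) ((m + 1) ^ 2), tmG (2 ^ j * k) ^ 2) tmMu := by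
    apply Integrable.const_mul
    exact integrable_finset_sum _ (fun j _ => integrable_tmMu (ii_tmG_pow_sq j 0 1))
  have h2 : ∫ k, tmD m k ^ 2 ∂tmMu
      ≤ ∫ k, (c:ℝ) * ∑ j ∈ Finset.Ico (m ^ 2) ((m + 1) ^ 2), tmG (2 ^ j * k) ^ 2 ∂tmMu :=
    integral_mono_of_nonneg (Filter.Eventually.of_forall (fun k => sq_nonneg _)) hint
      (Filter.Eventually.of_forall hpt)
  refine h2.trans ?_
  rw [MeasureTheory.integral_const_mul, integral_finset_sum _ (fun j _ => integrable_tmMu (ii_tmG_pow_sq j 0 1))]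
  have : ∀ j ∈ Finset.Ico (m ^ 2) ((m + 1) ^ 2),
      ∫ k, tmG (2 ^ j * k) ^ 2 ∂tmMu = tmSig := by
    intro j _
    rw [integral_tmMu]
    exact sq_invar j
  rw [Finset.sum_congr rfl this, Finset.sum_const, hcard]
  simp only [nsmul_eq_mul, sq]
  ring_nf
  exact le_refl _

/-! Borel–Cantelli -/

noncomputable def tmU (m : ℕ) (k : ℝ) : ℝ := (tmS (m ^ 2) k / ((m:ℝ) ^ 2)) ^ 2
noncomputable def tmV (m : ℕ) (k : ℝ) : ℝ := (tmD m k / ((m:ℝ) ^ 2)) ^ 2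

lemma tmU_nonneg (m : ℕ) (k : ℝ) : 0 ≤ tmU m k := sq_nonneg _
lemma tmV_nonneg (m : ℕ) (k : ℝ) : 0 ≤ tmV m k := sq_nonneg _

lemma tmU_eq (m : ℕ) (k : ℝ) : tmU m k = tmS (m ^ 2) k ^ 2 / ((m:ℝ) ^ 2) ^ 2 := by
  unfold tmU; rw [div_pow]

lemma tmU_lintegral (m : ℕ) (hm : 1 ≤ m) :
    ∫⁻ k, ENNReal.ofReal (tmU m k) ∂tmMu ≤ ENNReal.ofReal (4 * tmSig / (m:ℝ) ^ 2) := by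
  have hint : Integrable (fun k => tmU m k) tmMu := by
    simp only [tmU_eq]
    exact (tmS_sq_integrable (m ^ 2)).div_const _
  rw [← ofReal_integral_eq_lintegral_ofReal hint
    (Filter.Eventually.of_forall (fun k => tmU_nonneg m k))]
  apply ENNReal.ofReal_le_ofReal
  have h1 : ∫ k, tmU m k ∂tmMu = (∫ k, tmS (m ^ 2) k ^ 2 ∂tmMu) / ((m:ℝ) ^ 2) ^ 2 := by
    simp only [tmU_eq]
    exact integral_div _ _
  rw [h1]
  have hm0 : (0:ℝ) < (m:ℝ) ^ 2 := by
    have : (0:ℝ) < (m:ℝ) := by exact_mod_cast hm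
    positivity
  have h2 := tmS_sq_moment (m ^ 2)
  have h3 : (4 : ℝ) * (m ^ 2 : ℕ) * tmSig = 4 * (m:ℝ) ^ 2 * tmSig := by push_cast; ring
  rw [h3] at h2
  rw [div_le_div_iff₀ (by positivity) (by positivity)]
  calc (∫ k, tmS (m ^ 2) k ^ 2 ∂tmMu) * (m:ℝ) ^ 2
      ≤ (4 * (m:ℝ) ^ 2 * tmSig) * (m:ℝ) ^ 2 := by
        apply mul_le_mul_of_nonneg_right h2 (le_of_lt hm0)
    _ = 4 * tmSig * ((m:ℝ) ^ 2) ^ 2 := by ring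

lemma tmV_lintegral (m : ℕ) (hm : 1 ≤ m) :
    ∫⁻ k, ENNReal.ofReal (tmV m k) ∂tmMu ≤ ENNReal.ofReal (9 * tmSig / (m:ℝ) ^ 2) := by
  set c : ℕ := 2 * m + 1 with hc
  set W : ℝ → ℝ := fun k =>
    ((c:ℝ) * ∑ j ∈ Finset.Ico (m ^ 2) ((m + 1) ^ 2), tmG (2 ^ j * k) ^ 2) / ((m:ℝ) ^ 2) ^ 2
    with hW
  have hm0 : (0:ℝ) < (m:ℝ) ^ 2 := by
    have : (0:ℝ) < (m:ℝ) := by exact_mod_cast hm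
    positivity
  have hcard : (Finset.Ico (m ^ 2) ((m + 1) ^ 2)).card = c := by
    rw [Nat.card_Ico]
    have he : (m + 1) ^ 2 = m ^ 2 + 2 * m + 1 := by ring
    omega
  have hpt : ∀ k, tmV m k ≤ W k := by
    intro k
    unfold tmV
    rw [div_pow, hW]
    apply div_le_div_of_nonneg_right ?_ (by positivity)
    · have h1 := sq_sum_le_card_mul_sum_sq (s := Finset.Ico (m ^ 2) ((m + 1) ^ 2))
        (f := fun j => |tmG (2 ^ j * k)|)
      rw [hcard] at h1
      unfold tmD
      refine le_trans h1 (le_of_eq ?_)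
      congr 1
      exact Finset.sum_congr rfl (fun j _ => sq_abs _)
  have hWint : Integrable W tmMu := by
    apply Integrable.div_const
    apply Integrable.const_mul
    exact integrable_finset_sum _ (fun j _ => integrable_tmMu (ii_tmG_pow_sq j 0 1))
  have hWnn : ∀ k, 0 ≤ W k := by
    intro k
    rw [hW]
    apply div_nonneg _ (by positivity)
    apply mul_nonneg (by positivity)
    exact Finset.sum_nonneg (fun j _ => sq_nonneg _)
  calc ∫⁻ k, ENNReal.ofReal (tmV m k) ∂tmMu
      ≤ ∫⁻ k, ENNReal.ofReal (W k) ∂tmMu :=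
        lintegral_mono (fun k => ENNReal.ofReal_le_ofReal (hpt k))
    _ = ENNReal.ofReal (∫ k, W k ∂tmMu) :=
        (ofReal_integral_eq_lintegral_ofReal hWint
          (Filter.Eventually.of_forall hWnn)).symm
    _ ≤ ENNReal.ofReal (9 * tmSig / (m:ℝ) ^ 2) := by
        apply ENNReal.ofReal_le_ofReal
        have hval : ∫ k, W k ∂tmMu = ((c:ℝ) * ((c:ℝ) * tmSig)) / ((m:ℝ) ^ 2) ^ 2 := by
          rw [hW]
          simp only
          rw [MeasureTheory.integral_div, MeasureTheory.integral_const_mul,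
            integral_finset_sum _ (fun j _ => integrable_tmMu (ii_tmG_pow_sq j 0 1))]
          congr 2
          have : ∀ j ∈ Finset.Ico (m ^ 2) ((m + 1) ^ 2),
              ∫ k, tmG (2 ^ j * k) ^ 2 ∂tmMu = tmSig := by
            intro j _
            rw [integral_tmMu]
            exact sq_invar j
          rw [Finset.sum_congr rfl this, Finset.sum_const, hcard, nsmul_eq_mul]
        rw [hval]
        have hcle : (c:ℝ) ≤ 3 * (m:ℝ) := by
          rw [hc]
          push_cast
          have : (1:ℝ) ≤ (m:ℝ) := by exact_mod_cast hm
          linarith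
        have hcnn : (0:ℝ) ≤ (c:ℝ) := by positivity
        rw [div_le_div_iff₀ (by positivity) (by positivity)]
        calc (c:ℝ) * ((c:ℝ) * tmSig) * (m:ℝ) ^ 2
            ≤ (3 * (m:ℝ)) * ((3 * (m:ℝ)) * tmSig) * (m:ℝ) ^ 2 := by
              apply mul_le_mul_of_nonneg_right _ (le_of_lt hm0)
              apply mul_le_mul hcle (mul_le_mul_of_nonneg_right hcle tmSig_nonneg)
                (mul_nonneg hcnn tmSig_nonneg) (by positivity)
          _ = 9 * tmSig * ((m:ℝ) ^ 2) ^ 2 := by ring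

lemma tmS_zero (k : ℝ) : tmS 0 k = 0 := by simp [tmS]

lemma tm_ae_conv_sq :
    ∀ᵐ k ∂tmMu, Filter.Tendsto (fun m => tmS (m ^ 2) k / ((m:ℝ) ^ 2)) atTop (nhds 0)
      ∧ Filter.Tendsto (fun m => tmD m k / ((m:ℝ) ^ 2)) atTop (nhds 0) := by
  set F : ℕ → ℝ → ENNReal := fun m k => ENNReal.ofReal (tmU m k) + ENNReal.ofReal (tmV m k)
    with hF
  have hmeasF : ∀ m, Measurable (F m) := by
    intro m
    refine Measurable.add (f := fun k => ENNReal.ofReal (tmU m k)) (g := fun k => ENNReal.ofReal (tmV m k)) ?_ ?_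
    · exact ((((tmS_measurable (m ^ 2)).div_const _).pow_const 2)).ennreal_ofReal
    · exact ((((tmD_measurable m).div_const _).pow_const 2)).ennreal_ofReal
  have hbound : ∀ m, ∫⁻ k, F m k ∂tmMu ≤ ENNReal.ofReal (13 * tmSig / (m:ℝ) ^ 2) := by
    intro m
    rcases Nat.eq_zero_or_pos m with hm | hm
    · subst hm
      have hU : ∀ k, tmU 0 k = 0 := by
        intro k; unfold tmU; rw [show (0:ℕ)^2 = 0 from rfl, tmS_zero]; norm_num
      have hV : ∀ k, tmV 0 k = 0 := by
        intro k; unfold tmV; norm_num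
      have : ∀ k, F 0 k = 0 := by
        intro k; rw [hF]; simp [hU k, hV k]
      simp only [this]
      rw [lintegral_const]
      simp
    · have h1 := tmU_lintegral m hm
      have h2 := tmV_lintegral m hm
      have h3 : ∫⁻ k, F m k ∂tmMu
          = (∫⁻ k, ENNReal.ofReal (tmU m k) ∂tmMu) + ∫⁻ k, ENNReal.ofReal (tmV m k) ∂tmMu := by
        rw [hF]
        exact lintegral_add_left
          ((((tmS_measurable (m ^ 2)).div_const _).pow_const 2)).ennreal_ofReal _
      rw [h3]
      calc (∫⁻ k, ENNReal.ofReal (tmU m k) ∂tmMu) + ∫⁻ k, ENNReal.ofReal (tmV m k) ∂tmMu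
          ≤ ENNReal.ofReal (4 * tmSig / (m:ℝ) ^ 2) + ENNReal.ofReal (9 * tmSig / (m:ℝ) ^ 2) :=
            add_le_add h1 h2
        _ ≤ ENNReal.ofReal (13 * tmSig / (m:ℝ) ^ 2) := by
            rw [← ENNReal.ofReal_add
              (div_nonneg (by nlinarith [tmSig_nonneg]) (by positivity))
              (div_nonneg (by nlinarith [tmSig_nonneg]) (by positivity))]
            apply ENNReal.ofReal_le_ofReal
            rw [← add_div]
            apply le_of_eq
            congr 1
            ring
  have hsum_bound : (∑' m, ∫⁻ k, F m k ∂tmMu) ≠ ⊤ := by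
    have hsummable : Summable (fun m : ℕ => 13 * tmSig / (m:ℝ) ^ 2) := by
      have h0 : Summable (fun m : ℕ => 13 * tmSig * (1 / (m:ℝ) ^ 2)) := by
        apply Summable.mul_left
        exact Real.summable_one_div_nat_pow.mpr (by norm_num : 1 < 2)
      have he : (fun m : ℕ => 13 * tmSig * (1 / (m:ℝ) ^ 2))
          = fun m : ℕ => 13 * tmSig / (m:ℝ) ^ 2 := by
        funext m; ring
      rwa [he] at h0
    have hnn : ∀ m : ℕ, 0 ≤ 13 * tmSig / (m:ℝ) ^ 2 :=
      fun m => div_nonneg (by nlinarith [tmSig_nonneg]) (by positivity)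
    have h1 : (∑' m, ∫⁻ k, F m k ∂tmMu) ≤ ∑' m : ℕ, ENNReal.ofReal (13 * tmSig / (m:ℝ) ^ 2) :=
      ENNReal.tsum_le_tsum hbound
    have h2 : (∑' m : ℕ, ENNReal.ofReal (13 * tmSig / (m:ℝ) ^ 2)) ≠ ⊤ := by
      rw [← ENNReal.ofReal_tsum_of_nonneg hnn hsummable]
      exact ENNReal.ofReal_ne_top
    exact ne_top_of_le_ne_top h2 h1
  have hlint : ∫⁻ k, (∑' m, F m k) ∂tmMu ≠ ⊤ := by
    rw [lintegral_tsum (fun m => (hmeasF m).aemeasurable)]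
    exact hsum_bound
  have hae : ∀ᵐ k ∂tmMu, (∑' m, F m k) < ⊤ :=
    ae_lt_top (Measurable.ennreal_tsum hmeasF) hlint
  have hsq : ∀ (u a : ℕ → ℝ), (∀ m, u m = (a m) ^ 2) →
      Filter.Tendsto u atTop (nhds 0) → Filter.Tendsto a atTop (nhds 0) := by
    intro u a he hu
    have hg : Filter.Tendsto (fun m => Real.sqrt (u m)) atTop (nhds 0) := by
      have h2 := (Real.continuous_sqrt.tendsto 0).comp hu
      simpa [Function.comp_def] using h2
    apply squeeze_zero_norm _ hg
    intro m
    rw [he m, Real.sqrt_sq_eq_abs]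
    exact le_of_eq (Real.norm_eq_abs _)
  filter_upwards [hae] with k hk
  have htend : Filter.Tendsto (fun m => F m k) atTop (nhds 0) :=
    ENNReal.tendsto_atTop_zero_of_tsum_ne_top (ne_of_lt hk)
  have extract : ∀ (u : ℕ → ℝ), (∀ m, 0 ≤ u m) →
      (∀ m, ENNReal.ofReal (u m) ≤ F m k) → Filter.Tendsto u atTop (nhds 0) := by
    intro u hnn hle
    have h1 : Filter.Tendsto (fun m => ENNReal.ofReal (u m)) atTop (nhds 0) := by
      apply tendsto_of_tendsto_of_tendsto_of_le_of_le tendsto_const_nhds htend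
      · intro m; exact zero_le
      · intro m; exact hle m
    have h2 := (ENNReal.tendsto_toReal (by simp : (0:ENNReal) ≠ ⊤)).comp h1
    simp only [Function.comp_def] at h2
    have h3 : (fun m => (ENNReal.ofReal (u m)).toReal) = u := by
      funext m; exact ENNReal.toReal_ofReal (hnn m)
    rwa [h3, ENNReal.toReal_zero] at h2
  have hUtend : Filter.Tendsto (fun m => tmU m k) atTop (nhds 0) :=
    extract _ (fun m => tmU_nonneg m k) (fun m => by rw [hF]; exact le_self_add)
  have hVtend : Filter.Tendsto (fun m => tmV m k) atTop (nhds 0) :=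
    extract _ (fun m => tmV_nonneg m k) (fun m => by rw [hF]; exact le_add_self)
  constructor
  · exact hsq _ _ (fun m => rfl) hUtend
  · exact hsq _ _ (fun m => rfl) hVtend

/-! Filling in between squares -/

lemma nat_sqrt_tendsto : Filter.Tendsto Nat.sqrt atTop atTop := by
  apply Filter.tendsto_atTop_atTop.mpr
  intro b
  refine ⟨b * b, fun a ha => ?_⟩
  exact Nat.le_sqrt.mpr (le_trans (le_refl _) ha)

lemma det_conv {k : ℝ}
    (hS : Filter.Tendsto (fun m => tmS (m ^ 2) k / ((m:ℝ) ^ 2)) atTop (nhds 0))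
    (hD : Filter.Tendsto (fun m => tmD m k / ((m:ℝ) ^ 2)) atTop (nhds 0)) :
    Filter.Tendsto (fun n => tmS n k / (n:ℝ)) atTop (nhds 0) := by
  have hb0 : Filter.Tendsto
      (fun m => |tmS (m ^ 2) k| / ((m:ℝ) ^ 2) + tmD m k / ((m:ℝ) ^ 2)) atTop (nhds 0) := by
    have h1 : Filter.Tendsto (fun m => |tmS (m ^ 2) k / ((m:ℝ) ^ 2)|) atTop (nhds 0) := by
      have := hS.abs
      simpa using this
    have h2 : (fun m => |tmS (m ^ 2) k / ((m:ℝ) ^ 2)|)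
        = fun m => |tmS (m ^ 2) k| / ((m:ℝ) ^ 2) := by
      funext m
      rw [abs_div, abs_of_nonneg (by positivity : (0:ℝ) ≤ (m:ℝ) ^ 2)]
    rw [h2] at h1
    have := h1.add hD
    simpa using this
  have hb : Filter.Tendsto
      (fun n => |tmS ((Nat.sqrt n) ^ 2) k| / ((Nat.sqrt n : ℝ) ^ 2)
        + tmD (Nat.sqrt n) k / ((Nat.sqrt n : ℝ) ^ 2)) atTop (nhds 0) :=
    hb0.comp nat_sqrt_tendsto
  apply squeeze_zero_norm' _ hb
  filter_upwards [Filter.eventually_ge_atTop 1] with n hn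
  set m := Nat.sqrt n with hm
  have hmpos : 1 ≤ m := by
    rw [hm]
    have := Nat.sqrt_pos.mpr (by omega : 0 < n)
    omega
  have hm2 : m ^ 2 ≤ n := by
    rw [hm]
    exact Nat.sqrt_le' n
  have hm3 : n ≤ (m + 1) ^ 2 := by
    rw [hm]
    exact le_of_lt (Nat.lt_succ_sqrt' n)
  have habs : |tmS n k| ≤ |tmS (m ^ 2) k| + tmD m k := by
    have hdiff : tmS n k - tmS (m ^ 2) k = ∑ j ∈ Finset.Ico (m ^ 2) n, tmG (2 ^ j * k) := by
      unfold tmS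
      rw [Finset.sum_Ico_eq_sub _ hm2]
    have h2 : |tmS n k - tmS (m ^ 2) k| ≤ tmD m k := by
      rw [hdiff]
      refine (Finset.abs_sum_le_sum_abs _ _).trans ?_
      unfold tmD
      apply Finset.sum_le_sum_of_subset_of_nonneg
      · exact Finset.Ico_subset_Ico (le_refl _) hm3
      · intro j _ _
        exact abs_nonneg _
    calc |tmS n k| = |tmS (m ^ 2) k + (tmS n k - tmS (m ^ 2) k)| := by ring_nf
      _ ≤ |tmS (m ^ 2) k| + |tmS n k - tmS (m ^ 2) k| := abs_add_le _ _
      _ ≤ |tmS (m ^ 2) k| + tmD m k := by linarith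
  have hmr : (0:ℝ) < (m:ℝ) ^ 2 := by
    have : (0:ℝ) < (m:ℝ) := by exact_mod_cast hmpos
    positivity
  have hmn : (m:ℝ) ^ 2 ≤ (n:ℝ) := by exact_mod_cast hm2
  have hnr : (0:ℝ) < (n:ℝ) := lt_of_lt_of_le hmr hmn
  rw [Real.norm_eq_abs, abs_div, abs_of_nonneg (le_of_lt hnr)]
  calc |tmS n k| / (n:ℝ) ≤ |tmS n k| / (m:ℝ) ^ 2 := by
        apply div_le_div_of_nonneg_left (abs_nonneg _) hmr hmn
    _ ≤ (|tmS (m ^ 2) k| + tmD m k) / (m:ℝ) ^ 2 := by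
        apply div_le_div_of_nonneg_right habs hmr.le
    _ = |tmS (m ^ 2) k| / ((m:ℝ) ^ 2) + tmD m k / ((m:ℝ) ^ 2) := add_div _ _ _

lemma tm_ae_conv_mu :
    ∀ᵐ k ∂tmMu, Filter.Tendsto (fun n => tmS n k / (n:ℝ)) atTop (nhds 0) := by
  filter_upwards [tm_ae_conv_sq] with k hk
  exact det_conv hk.1 hk.2

/-! Periodization to all of ℝ -/

lemma tmS_add_int (n : ℕ) (k : ℝ) (z : ℤ) : tmS n (k + z) = tmS n k := by
  unfold tmS
  apply Finset.sum_congr rfl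
  intro j _
  rw [mul_add]
  have h : (2:ℝ) ^ j * (z:ℝ) = ((2 ^ j * z : ℤ) : ℝ) := by push_cast; ring
  rw [h, tmG_add_int]

lemma tm_ae_conv :
    ∀ᵐ k ∂(volume : Measure ℝ), Filter.Tendsto (fun n => tmS n k / (n:ℝ)) atTop (nhds 0) := by
  set A : Set ℝ := {k | ¬ Filter.Tendsto (fun n => tmS n k / (n:ℝ)) atTop (nhds 0)} with hA
  have hA0 : volume (A ∩ Set.Ioc 0 1) = 0 := by
    have h1 := tm_ae_conv_mu
    rw [ae_iff] at h1
    unfold tmMu at h1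
    rwa [Measure.restrict_apply' measurableSet_Ioc] at h1
  have hAz : ∀ z : ℤ, volume (A ∩ Set.Ioc (z:ℝ) (z + 1)) = 0 := by
    intro z
    have hsub : A ∩ Set.Ioc (z:ℝ) (z + 1) ⊆ (fun x => x + (-(z:ℝ))) ⁻¹' (A ∩ Set.Ioc 0 1) := by
      rintro x ⟨hxA, hxI⟩
      constructor
      · rw [hA, Set.mem_setOf_eq]
        rw [hA, Set.mem_setOf_eq] at hxA
        intro hcontra
        apply hxA
        have he : (fun n => tmS n x / (n:ℝ)) = fun n => tmS n (x + -(z:ℝ)) / (n:ℝ) := by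
          funext n
          rw [show x + -(z:ℝ) = x + ((-z : ℤ) : ℝ) by push_cast; ring, tmS_add_int]
        rw [he]
        exact hcontra
      · simp only [Set.mem_preimage, Set.mem_Ioc]
        constructor
        · linarith [hxI.1]
        · linarith [hxI.2]
    have hpre : volume ((fun x => x + (-(z:ℝ))) ⁻¹' (A ∩ Set.Ioc 0 1)) = 0 := by
      rw [measure_preimage_add_right]
      exact hA0
    exact measure_mono_null hsub hpre
  have hcover : A ⊆ ⋃ z : ℤ, A ∩ Set.Ioc (z:ℝ) (z + 1) := by
    intro x hx
    have := iUnion_Ioc_intCast ℝ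
    have hx2 : x ∈ ⋃ z : ℤ, Set.Ioc (z:ℝ) (z + 1) := by rw [this]; trivial
    obtain ⟨s, ⟨z, rfl⟩, hxs⟩ := hx2
    exact Set.mem_iUnion.mpr ⟨z, hx, hxs⟩
  have : volume A = 0 := by
    apply measure_mono_null hcover
    exact measure_iUnion_null (fun z => hAz z)
  rw [ae_iff]
  exact this

/-! Final theorem -/

theorem stmt_17 :
    ∀ᵐ k ∂(volume : Measure ℝ),
      Filter.Tendsto (fun n : ℕ => tmScalingExp n k) Filter.atTop (nhds (-1)) := by
  filter_upwards [tm_ae_conv] with k hk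
  have hlog2 : Real.log 2 ≠ 0 := by
    have := Real.log_pos (by norm_num : (1:ℝ) < 2)
    linarith
  have hmain : Filter.Tendsto (fun n : ℕ => -1 + (2 / Real.log 2) * (tmS n k / (n:ℝ)))
      atTop (nhds (-1)) := by
    have h1 := hk.const_mul (2 / Real.log 2)
    have h2 := h1.const_add (-1 : ℝ)
    simpa using h2
  apply Filter.Tendsto.congr' _ hmain
  filter_upwards [Filter.eventually_ge_atTop 1] with n hn
  have hnr : (0:ℝ) < (n:ℝ) := by exact_mod_cast hn
  have hsum : ∑ j ∈ Finset.range n, Real.log |Real.sin (Real.pi * 2 ^ j * k)|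
      = tmS n k - n * Real.log 2 := by
    unfold tmS
    have he : ∀ j, Real.log |Real.sin (Real.pi * 2 ^ j * k)| = tmG (2 ^ j * k) - Real.log 2 := by
      intro j
      unfold tmG
      rw [mul_assoc]
      ring
    rw [Finset.sum_congr rfl (fun j _ => he j), Finset.sum_sub_distrib, Finset.sum_const,
      Finset.card_range, nsmul_eq_mul]
  have hn0 : (n:ℝ) ≠ 0 := ne_of_gt hnr
  show -1 + (2 / Real.log 2) * (tmS n k / (n:ℝ)) = tmScalingExp n k
  unfold tmScalingExp
  rw [hsum]
  field_simp
  ring
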